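/- For any prime p ≥ 7, the identity B_{p-3}^{(-(p-3))} = 2 · C_{p-4}^{(-(p-2))} holds between poly-Bernoulli numbers of type B and type C. -/
import Mathlib

/-- Stirling numbers of the second kind. -/
def stirling2 : ℕ → ℕ → ℕ
  | 0, 0 => 1
  | 0, _ + 1 => 0
  | _ + 1, 0 => 0
  | n + 1, m + 1 => (m + 1) * stirling2 n (m + 1) + stirling2 n m

lemma stirling2_eq_zero_of_lt : ∀ {n m : ℕ}, n < m → stirling2 n m = 0 := by
  intro n
  induction n with
  | zero => intro m h; match m, h with | m+1, _ => rfl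
  | succ n ih =>
    intro m h
    match m, h with
    | m+1, h =>
      show (m + 1) * stirling2 n (m + 1) + stirling2 n m = 0
      rw [ih (by omega), ih (by omega)]; simp

lemma stirling2_succ (n m : ℕ) :
    stirling2 (n+1) (m+1) = (m + 1) * stirling2 n (m + 1) + stirling2 n m := rfl

lemma choose_mul_helper (x j : ℕ) : x * x.choose j = (j+1) * x.choose (j+1) + j * x.choose j := by
  rcases le_or_gt j x with h | h
  · have h1 : x.choose (j+1) * (j+1) = x.choose j * (x - j) := Nat.choose_succ_right_eq x j
    have : (j+1) * x.choose (j+1) + j * x.choose j = (x - j) * x.choose j + j * x.choose j := by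
      rw [mul_comm, h1]; ring
    rw [this, ← Nat.add_mul]; congr 1; omega
  · rw [Nat.choose_eq_zero_of_lt h, Nat.choose_eq_zero_of_lt (by omega)]
    ring

lemma pow_eq_sum_stirling (k x : ℕ) :
    x ^ k = ∑ j ∈ Finset.range (k+1), j.factorial * stirling2 k j * x.choose j := by
  induction k with
  | zero => simp [stirling2]
  | succ k ih =>
    rw [pow_succ, ih, Finset.sum_mul]
    rw [Finset.sum_range_succ' (fun j => j.factorial * stirling2 (k+1) j * x.choose j)]
    have h0 : Nat.factorial 0 * stirling2 (k+1) 0 * x.choose 0 = 0 := by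
      show Nat.factorial 0 * 0 * x.choose 0 = 0
      simp
    rw [h0, add_zero]
    have hL : ∀ j ∈ Finset.range (k+1),
        j.factorial * stirling2 k j * x.choose j * x
        = (j+1).factorial * stirling2 k j * x.choose (j+1)
          + j * (j.factorial * stirling2 k j * x.choose j) := by
      intro j _
      have h := choose_mul_helper x j
      calc j.factorial * stirling2 k j * x.choose j * x
          = j.factorial * stirling2 k j * (x * x.choose j) := by ring
        _ = j.factorial * stirling2 k j * ((j+1) * x.choose (j+1) + j * x.choose j) := by rw [h]
        _ = (j+1).factorial * stirling2 k j * x.choose (j+1)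
          + j * (j.factorial * stirling2 k j * x.choose j) := by
            rw [Nat.factorial_succ]; ring
    rw [Finset.sum_congr rfl hL, Finset.sum_add_distrib]
    have hR : ∀ j ∈ Finset.range (k+1),
        (j+1).factorial * stirling2 (k+1) (j+1) * x.choose (j+1)
        = (j+1) * ((j+1).factorial * stirling2 k (j+1) * x.choose (j+1))
          + (j+1).factorial * stirling2 k j * x.choose (j+1) := by
      intro j _
      rw [stirling2_succ]; ring
    rw [Finset.sum_congr rfl hR, Finset.sum_add_distrib]
    have hshift : ∑ j ∈ Finset.range (k+1), j * (j.factorial * stirling2 k j * x.choose j)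
        = ∑ j ∈ Finset.range (k+1), (j+1) * ((j+1).factorial * stirling2 k (j+1) * x.choose (j+1)) := by
      rw [Finset.sum_range_succ' (fun j => j * (j.factorial * stirling2 k j * x.choose j)) k]
      rw [Finset.sum_range_succ (fun j => (j+1) * ((j+1).factorial * stirling2 k (j+1) * x.choose (j+1))) k]
      rw [stirling2_eq_zero_of_lt (show k < k+1 by omega)]
      simp
    rw [hshift]
    exact add_comm _ _

/-- `A n j = ∑_{m=0}^{n+1} (-1)^m m! S(n,m) C(m,j)` -/
def Asum (n j : ℕ) : ℤ :=
  ∑ m ∈ Finset.range (n+2), (-1:ℤ)^m * m.factorial * stirling2 n m * m.choose j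

/-- `W n j = ∑_{m=0}^{n+1} (-1)^m (m+1)! S(n,m) C(m,j)` -/
def Wsum (n j : ℕ) : ℤ :=
  ∑ m ∈ Finset.range (n+2), (-1:ℤ)^m * (m+1).factorial * stirling2 n m * m.choose j

lemma Wsum_eq (n j : ℕ) : Wsum n j = (j+1) * (Asum n j + Asum n (j+1)) := by
  have h : ∀ m ∈ Finset.range (n+2),
      (-1:ℤ)^m * (m+1).factorial * stirling2 n m * m.choose j
      = (j+1) * ((-1:ℤ)^m * m.factorial * stirling2 n m * m.choose j
        + (-1:ℤ)^m * m.factorial * stirling2 n m * m.choose (j+1)) := by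
    intro m _
    have h1 : (m+1) * m.choose j = (m+1).choose (j+1) * (j+1) := Nat.add_one_mul_choose_eq m j
    have h2 : (m+1).choose (j+1) = m.choose j + m.choose (j+1) := Nat.choose_succ_succ m j
    have key : (m+1) * m.choose j = (j+1) * (m.choose j + m.choose (j+1)) := by
      rw [h1, h2]; ring
    have keyZ : ((m:ℤ)+1) * m.choose j = (j+1) * (m.choose j + m.choose (j+1)) := by
      exact_mod_cast key
    have hf : ((m+1).factorial : ℤ) = (m+1) * m.factorial := by
      exact_mod_cast Nat.factorial_succ m
    calc (-1:ℤ)^m * (m+1).factorial * stirling2 n m * m.choose j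
        = (-1:ℤ)^m * m.factorial * stirling2 n m * (((m:ℤ)+1) * m.choose j) := by rw [hf]; ring
      _ = (-1:ℤ)^m * m.factorial * stirling2 n m * ((j+1) * (m.choose j + m.choose (j+1))) := by
          rw [keyZ]
      _ = (j+1) * ((-1:ℤ)^m * m.factorial * stirling2 n m * m.choose j
        + (-1:ℤ)^m * m.factorial * stirling2 n m * m.choose (j+1)) := by ring
  rw [Wsum, Finset.sum_congr rfl h, ← Finset.mul_sum, Finset.sum_add_distrib]
  rfl

def Hf (n j i : ℕ) : ℤ := (-1)^i * i * i.factorial * stirling2 n i * i.choose j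

lemma Asum_eq (n j : ℕ) : Asum n j = (-1:ℤ)^n * j.factorial * stirling2 (n+1) (j+1) := by
  induction n generalizing j with
  | zero =>
    rw [Asum]
    rw [Finset.sum_range_succ, Finset.sum_range_succ, Finset.sum_range_zero]
    cases j with
    | zero => simp [stirling2]
    | succ j => simp [stirling2, stirling2_succ, Nat.choose_zero_succ]
  | succ n ih =>
    -- Σ_{m∈range(n+3)} f m, peel m=0
    rw [Asum, Finset.sum_range_succ'
      (fun m => (-1:ℤ)^m * m.factorial * stirling2 (n+1) m * m.choose j)]
    have h0 : (-1:ℤ)^0 * Nat.factorial 0 * stirling2 (n+1) 0 * Nat.choose 0 j = 0 := by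
      show (-1:ℤ)^0 * Nat.factorial 0 * ((0:ℕ):ℤ) * Nat.choose 0 j = 0
      simp
    rw [h0, add_zero]
    -- rewrite each term via the Stirling recurrence
    have hsplit : ∀ m ∈ Finset.range (n+2),
        (-1:ℤ)^(m+1) * (m+1).factorial * stirling2 (n+1) (m+1) * (m+1).choose j
        = -((-1:ℤ)^m * ((m:ℤ)+1) * (m+1).factorial * stirling2 n (m+1) * (m+1).choose j)
          - ((-1:ℤ)^m * (m+1).factorial * stirling2 n m * (m+1).choose j) := by
      intro m _
      rw [stirling2_succ]
      push_cast
      ring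
    rw [Finset.sum_congr rfl hsplit]
    rw [Finset.sum_sub_distrib]
    have hU : ∑ m ∈ Finset.range (n+2),
        -((-1:ℤ)^m * ((m:ℤ)+1) * (m+1).factorial * stirling2 n (m+1) * (m+1).choose j)
        = Wsum n j - Asum n j := by
      have hH : ∀ m ∈ Finset.range (n+2),
          -((-1:ℤ)^m * ((m:ℤ)+1) * (m+1).factorial * stirling2 n (m+1) * (m+1).choose j)
          = Hf n j (m+1) := by
        intro m _
        rw [Hf]
        push_cast
        ring
      rw [Finset.sum_congr rfl hH]
      have e1 : ∑ m ∈ Finset.range (n+3), Hf n j m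
          = (∑ m ∈ Finset.range (n+2), Hf n j (m+1)) + Hf n j 0 :=
        Finset.sum_range_succ' _ _
      have e2 : ∑ m ∈ Finset.range (n+3), Hf n j m
          = (∑ m ∈ Finset.range (n+2), Hf n j m) + Hf n j (n+2) :=
        Finset.sum_range_succ _ _
      have hz : Hf n j (n+2) = 0 := by
        rw [Hf, stirling2_eq_zero_of_lt (show n < n+2 by omega)]
        simp
      have hz0 : Hf n j 0 = 0 := by rw [Hf]; simp
      have e3 : (∑ m ∈ Finset.range (n+2), Hf n j (m+1))
          = ∑ m ∈ Finset.range (n+2), Hf n j m := by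
        rw [e1] at e2; rw [hz] at e2; rw [hz0] at e2; linarith
      rw [e3]
      have e4 : ∀ m ∈ Finset.range (n+2),
          Hf n j m
          = ((-1:ℤ)^m * (m+1).factorial * stirling2 n m * m.choose j)
            - ((-1:ℤ)^m * m.factorial * stirling2 n m * m.choose j) := by
        intro m _
        rw [Hf]
        have hf : ((m+1).factorial : ℤ) = ((m:ℤ)+1) * m.factorial := by
          exact_mod_cast Nat.factorial_succ m
        rw [hf]; ring
      rw [Finset.sum_congr rfl e4, Finset.sum_sub_distrib, Wsum, Asum]
    rw [hU]
    -- now handle V by cases on j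
    cases j with
    | zero =>
      have hV : ∑ m ∈ Finset.range (n+2),
          (-1:ℤ)^m * (m+1).factorial * stirling2 n m * (m+1).choose 0
          = Wsum n 0 := by
        rw [Wsum]
        refine Finset.sum_congr rfl fun m _ => ?_
        rw [Nat.choose_zero_right, Nat.choose_zero_right]
      rw [hV, ih 0]
      have hs : stirling2 (n+1+1) (0+1) = stirling2 (n+1) 1 := by
        rw [stirling2_succ]
        show 1 * stirling2 (n+1) 1 + stirling2 (n+1) 0 = stirling2 (n+1) 1
        rw [show stirling2 (n+1) 0 = 0 from rfl]
        ring
      rw [hs]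
      push_cast
      ring
    | succ j =>
      have hV : ∑ m ∈ Finset.range (n+2),
          (-1:ℤ)^m * (m+1).factorial * stirling2 n m * (m+1).choose (j+1)
          = Wsum n j + Wsum n (j+1) := by
        rw [Wsum, Wsum, ← Finset.sum_add_distrib]
        refine Finset.sum_congr rfl fun m _ => ?_
        have : (m+1).choose (j+1) = m.choose j + m.choose (j+1) := Nat.choose_succ_succ m j
        rw [this]
        push_cast
        ring
      rw [hV, Wsum_eq n j, ih j, ih (j+1)]
      have hs : (stirling2 (n+1+1) (j+1+1) : ℤ)
          = (j+2) * stirling2 (n+1) (j+2) + stirling2 (n+1) (j+1) := by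
        rw [stirling2_succ]
        push_cast
        ring
      rw [hs]
      have hf1 : ((j+1).factorial : ℤ) = ((j:ℤ)+1) * j.factorial := by
        exact_mod_cast Nat.factorial_succ j
      rw [hf1]
      push_cast
      ring

/-- The poly-Bernoulli number `B_n^{(-k)}` with negative upper index `-k`. -/
def polyBernoulliB (k n : ℕ) : ℤ :=
  (-1 : ℤ) ^ n * ∑ m ∈ Finset.range (n + 1),
    (-1 : ℤ) ^ m * (m.factorial : ℤ) * (stirling2 n m : ℤ) * ((m : ℤ) + 1) ^ k

/-- The poly-Bernoulli number of type C, `C_n^{(-k)}`, with negative upper index `-k`. -/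
def polyBernoulliC (k n : ℕ) : ℤ :=
  (-1 : ℤ) ^ n * ∑ m ∈ Finset.range (n + 1),
    (-1 : ℤ) ^ m * (m.factorial : ℤ) * (stirling2 (n + 1) (m + 1) : ℤ) * ((m : ℤ) + 1) ^ k

/-- closed-form coefficient for the B-sums -/
def Bco (n : ℕ) : ℕ → ℤ
  | 0 => (stirling2 (n+1) 1 : ℤ)
  | j+1 => (j.factorial * stirling2 (n+1) (j+1) + (j+1).factorial * stirling2 (n+1) (j+2) : ℕ)

def Aco (n j : ℕ) : ℤ := (j.factorial * stirling2 (n+1) (j+1) : ℕ)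

/-- `A2 n j = ∑_{m=0}^{n+1} (-1)^m m! S(n,m) C(m+1,j)` -/
def A2sum (n j : ℕ) : ℤ :=
  ∑ m ∈ Finset.range (n+2), (-1:ℤ)^m * m.factorial * stirling2 n m * (m+1).choose j

lemma A2sum_eq (n : ℕ) : ∀ j, A2sum n j = (-1:ℤ)^n * Bco n j := by
  intro j
  cases j with
  | zero =>
    have h : A2sum n 0 = Asum n 0 := by
      refine Finset.sum_congr rfl fun m _ => ?_
      rw [Nat.choose_zero_right, Nat.choose_zero_right]
    rw [h, Asum_eq, Bco]
    simp
  | succ j =>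
    have h : A2sum n (j+1) = Asum n j + Asum n (j+1) := by
      rw [A2sum, Asum, Asum, ← Finset.sum_add_distrib]
      refine Finset.sum_congr rfl fun m _ => ?_
      rw [Nat.choose_succ_succ m j]
      push_cast
      ring
    rw [h, Asum_eq, Asum_eq, Bco]
    push_cast
    ring

lemma Asum_closed (n j : ℕ) : Asum n j = (-1:ℤ)^n * Aco n j := by
  rw [Asum_eq, Aco]; push_cast; ring

lemma bsum_eq (k n : ℕ) :
    ∑ m ∈ Finset.range (n+1),
      (-1:ℤ)^m * m.factorial * stirling2 n m * ((m:ℤ)+1)^k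
    = (-1:ℤ)^n * ∑ j ∈ Finset.range (k+1),
        (j.factorial : ℤ) * (stirling2 k j : ℤ) * Bco n j := by
  have hterm : ∀ m ∈ Finset.range (n+1),
      (-1:ℤ)^m * m.factorial * stirling2 n m * ((m:ℤ)+1)^k
      = ∑ j ∈ Finset.range (k+1),
          (-1:ℤ)^m * m.factorial * stirling2 n m
            * ((j.factorial : ℤ) * (stirling2 k j : ℤ) * ((m+1).choose j : ℤ)) := by
    intro m _
    have hp : ((m:ℤ)+1)^k
        = ∑ j ∈ Finset.range (k+1),
            (j.factorial : ℤ) * (stirling2 k j : ℤ) * ((m+1).choose j : ℤ) := by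
      have := pow_eq_sum_stirling k (m+1)
      have := congrArg (fun x : ℕ => (x : ℤ)) this
      push_cast at this
      convert this using 2
    rw [hp, Finset.mul_sum]
  rw [Finset.sum_congr rfl hterm]
  -- extend to range (n+2)
  have hext : ∑ m ∈ Finset.range (n+1),
      ∑ j ∈ Finset.range (k+1),
          (-1:ℤ)^m * m.factorial * stirling2 n m
            * ((j.factorial : ℤ) * (stirling2 k j : ℤ) * ((m+1).choose j : ℤ))
      = ∑ m ∈ Finset.range (n+2),
      ∑ j ∈ Finset.range (k+1),
          (-1:ℤ)^m * m.factorial * stirling2 n m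
            * ((j.factorial : ℤ) * (stirling2 k j : ℤ) * ((m+1).choose j : ℤ)) := by
    rw [Finset.sum_range_succ _ (n+1), stirling2_eq_zero_of_lt (show n < n+1 by omega)]
    simp
  rw [hext, Finset.sum_comm, Finset.mul_sum]
  refine Finset.sum_congr rfl fun j _ => ?_
  have : ∑ m ∈ Finset.range (n+2),
      (-1:ℤ)^m * m.factorial * stirling2 n m
        * ((j.factorial : ℤ) * (stirling2 k j : ℤ) * ((m+1).choose j : ℤ))
      = ((j.factorial : ℤ) * (stirling2 k j : ℤ)) * A2sum n j := by
    rw [A2sum, Finset.mul_sum]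
    refine Finset.sum_congr rfl fun m _ => ?_
    ring
  rw [this, A2sum_eq]
  ring

lemma dsum_eq (k n : ℕ) :
    ∑ m ∈ Finset.range (n+2),
      (-1:ℤ)^m * m.factorial * stirling2 n m * (m:ℤ)^k
    = (-1:ℤ)^n * ∑ j ∈ Finset.range (k+1),
        (j.factorial : ℤ) * (stirling2 k j : ℤ) * Aco n j := by
  have hterm : ∀ m ∈ Finset.range (n+2),
      (-1:ℤ)^m * m.factorial * stirling2 n m * (m:ℤ)^k
      = ∑ j ∈ Finset.range (k+1),
          (-1:ℤ)^m * m.factorial * stirling2 n m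
            * ((j.factorial : ℤ) * (stirling2 k j : ℤ) * (m.choose j : ℤ)) := by
    intro m _
    have hp : ((m:ℤ))^k
        = ∑ j ∈ Finset.range (k+1),
            (j.factorial : ℤ) * (stirling2 k j : ℤ) * (m.choose j : ℤ) := by
      have := pow_eq_sum_stirling k m
      have := congrArg (fun x : ℕ => (x : ℤ)) this
      push_cast at this
      convert this using 2
    rw [hp, Finset.mul_sum]
  rw [Finset.sum_congr rfl hterm, Finset.sum_comm, Finset.mul_sum]
  refine Finset.sum_congr rfl fun j _ => ?_
  have : ∑ m ∈ Finset.range (n+2),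
      (-1:ℤ)^m * m.factorial * stirling2 n m
        * ((j.factorial : ℤ) * (stirling2 k j : ℤ) * (m.choose j : ℤ))
      = ((j.factorial : ℤ) * (stirling2 k j : ℤ)) * Asum n j := by
    rw [Asum, Finset.mul_sum]
    refine Finset.sum_congr rfl fun m _ => ?_
    ring
  rw [this, Asum_closed]
  ring

def Gf (q k i : ℕ) : ℤ := (-1:ℤ)^i * i.factorial * stirling2 q i * (i:ℤ)^k

lemma LB (k n : ℕ) : polyBernoulliB k n
    = ∑ j ∈ Finset.range (k+1), (j.factorial : ℤ) * (stirling2 k j : ℤ) * Bco n j := by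
  rw [polyBernoulliB, bsum_eq, ← mul_assoc]
  have h1 : (-1:ℤ)^n * (-1)^n = 1 := by
    rw [← pow_add]
    exact Even.neg_one_pow ⟨n, by ring⟩
  rw [h1, one_mul]

lemma LC (k q : ℕ) (hq : 1 ≤ q) : polyBernoulliC k q
    = ∑ j ∈ Finset.range (k+1),
        (j.factorial : ℤ) * (stirling2 k j : ℤ) * (Bco q j - Aco q j) := by
  obtain ⟨q', rfl⟩ : ∃ q', q = q' + 1 := ⟨q - 1, by omega⟩
  set q := q' + 1 with hqdef
  have hterm : ∀ m ∈ Finset.range (q+1),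
      (-1:ℤ)^m * m.factorial * stirling2 (q+1) (m+1) * ((m:ℤ)+1)^k
      = -(Gf q k (m+1)) + (-1:ℤ)^m * m.factorial * stirling2 q m * ((m:ℤ)+1)^k := by
    intro m _
    rw [stirling2_succ, Gf]
    have hf : ((m+1).factorial : ℤ) = ((m:ℤ)+1) * m.factorial := by
      exact_mod_cast Nat.factorial_succ m
    push_cast [hf]
    ring
  rw [polyBernoulliC, Finset.sum_congr rfl hterm, Finset.sum_add_distrib]
  have e1 : ∑ m ∈ Finset.range (q+2), Gf q k m
      = (∑ m ∈ Finset.range (q+1), Gf q k (m+1)) + Gf q k 0 :=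
    Finset.sum_range_succ' _ _
  have hz0 : Gf q k 0 = 0 := by
    rw [Gf]
    have : stirling2 q 0 = 0 := rfl
    rw [this]
    simp
  have hshift2 : ∑ m ∈ Finset.range (q+1), -(Gf q k (m+1))
      = -∑ m ∈ Finset.range (q+2), Gf q k m := by
    rw [Finset.sum_neg_distrib, e1, hz0, add_zero]
  have hd : ∑ m ∈ Finset.range (q+2), Gf q k m
      = (-1:ℤ)^q * ∑ j ∈ Finset.range (k+1),
        (j.factorial : ℤ) * (stirling2 k j : ℤ) * Aco q j := by
    rw [← dsum_eq]
    rfl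
  rw [hshift2, hd, bsum_eq]
  have h1 : (-1:ℤ)^q * (-1)^q = 1 := by
    rw [← pow_add]
    exact Even.neg_one_pow ⟨q, by ring⟩
  have hre : ∀ (X Y : ℤ), (-1:ℤ)^q * (-((-1:ℤ)^q * X) + (-1:ℤ)^q * Y)
      = ((-1:ℤ)^q * (-1)^q) * (Y - X) := by intro X Y; ring
  rw [hre, h1, one_mul, ← Finset.sum_sub_distrib]
  refine Finset.sum_congr rfl fun j _ => ?_
  ring

def Kf (n i : ℕ) : ℤ := (i.factorial : ℤ) * (i+1).factorial * stirling2 n i * stirling2 n (i+1)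

lemma key (n : ℕ) (hn : 1 ≤ n) :
    ∑ j ∈ Finset.range (n+1),
      ((j+1).factorial : ℤ) * (j+1).factorial * stirling2 n (j+1) * stirling2 (n+1) (j+2)
    = ∑ j ∈ Finset.range (n+1),
      ((j+1).factorial : ℤ) * j.factorial * stirling2 n (j+1) * stirling2 (n+1) (j+1) := by
  obtain ⟨n', rfl⟩ : ∃ n', n = n' + 1 := ⟨n - 1, by omega⟩
  set n := n' + 1 with hndef
  have hL : ∀ j ∈ Finset.range (n+1),
      ((j+1).factorial : ℤ) * (j+1).factorial * stirling2 n (j+1) * stirling2 (n+1) (j+2)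
      = Kf n (j+1) + ((j+1).factorial : ℤ) * (j+1).factorial * stirling2 n (j+1) * stirling2 n (j+1) := by
    intro j _
    rw [stirling2_succ n (j+1), Kf]
    have hf : ((j+2).factorial : ℤ) = ((j:ℤ)+2) * (j+1).factorial := by
      exact_mod_cast Nat.factorial_succ (j+1)
    push_cast [hf]
    ring
  have hR : ∀ j ∈ Finset.range (n+1),
      ((j+1).factorial : ℤ) * j.factorial * stirling2 n (j+1) * stirling2 (n+1) (j+1)
      = Kf n j + ((j+1).factorial : ℤ) * (j+1).factorial * stirling2 n (j+1) * stirling2 n (j+1) := by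
    intro j _
    rw [stirling2_succ n j, Kf]
    have hf : ((j+1).factorial : ℤ) = ((j:ℤ)+1) * j.factorial := by
      exact_mod_cast Nat.factorial_succ j
    push_cast [hf]
    ring
  rw [Finset.sum_congr rfl hL, Finset.sum_congr rfl hR,
    Finset.sum_add_distrib, Finset.sum_add_distrib]
  congr 1
  have e1 : ∑ i ∈ Finset.range (n+2), Kf n i
      = (∑ j ∈ Finset.range (n+1), Kf n (j+1)) + Kf n 0 :=
    Finset.sum_range_succ' _ _
  have e2 : ∑ i ∈ Finset.range (n+2), Kf n i
      = (∑ j ∈ Finset.range (n+1), Kf n j) + Kf n (n+1) :=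
    Finset.sum_range_succ _ _
  have hz0 : Kf n 0 = 0 := by
    rw [Kf]
    have : stirling2 n 0 = 0 := rfl
    rw [this]
    simp
  have hz1 : Kf n (n+1) = 0 := by
    rw [Kf, stirling2_eq_zero_of_lt (show n < n+1 by omega)]
    simp
  rw [e1, hz0] at e2
  rw [hz1, add_zero] at e2
  linarith

lemma main_identity (q : ℕ) (hq : 1 ≤ q) :
    polyBernoulliB (q+1) (q+1) = 2 * polyBernoulliC (q+2) q := by
  rw [LB, LC _ _ hq]
  rw [Finset.sum_range_succ'
    (fun j => (j.factorial : ℤ) * (stirling2 (q+1) j : ℤ) * Bco (q+1) j)]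
  rw [Finset.sum_range_succ'
    (fun j => (j.factorial : ℤ) * (stirling2 (q+2) j : ℤ) * (Bco q j - Aco q j))]
  have hz1 : (Nat.factorial 0 : ℤ) * (stirling2 (q+1) 0 : ℤ) * Bco (q+1) 0 = 0 := by
    have : stirling2 (q+1) 0 = 0 := rfl
    rw [this]
    simp
  have hz2 : (Nat.factorial 0 : ℤ) * (stirling2 (q+2) 0 : ℤ) * (Bco q 0 - Aco q 0) = 0 := by
    have h : Bco q 0 - Aco q 0 = 0 := by
      rw [Bco, Aco]
      push_cast [Nat.factorial_zero]
      ring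
    rw [h]
    simp
  rw [hz1, hz2, add_zero, add_zero]
  have hRt : ∀ j ∈ Finset.range (q+2),
      ((fun j => (j.factorial : ℤ) * (stirling2 (q+2) j : ℤ) * (Bco q j - Aco q j)) (j+1))
      = ((j+1).factorial : ℤ) * (j.factorial : ℤ) * (stirling2 (q+1) (j+1) : ℤ)
          * (stirling2 (q+2) (j+1) : ℤ) := by
    intro j _
    show ((j+1).factorial : ℤ) * (stirling2 (q+2) (j+1) : ℤ) * (Bco q (j+1) - Aco q (j+1)) = _
    have h : Bco q (j+1) - Aco q (j+1) = (j.factorial : ℤ) * (stirling2 (q+1) (j+1) : ℤ) := by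
      rw [Bco, Aco]
      push_cast
      ring
    rw [h]
    ring
  have hLt : ∀ j ∈ Finset.range (q+1),
      ((fun j => (j.factorial : ℤ) * (stirling2 (q+1) j : ℤ) * Bco (q+1) j) (j+1))
      = ((j+1).factorial : ℤ) * (j.factorial : ℤ) * (stirling2 (q+1) (j+1) : ℤ)
          * (stirling2 (q+2) (j+1) : ℤ)
        + ((j+1).factorial : ℤ) * ((j+1).factorial : ℤ) * (stirling2 (q+1) (j+1) : ℤ)
          * (stirling2 (q+1+1) (j+2) : ℤ) := by
    intro j _
    show ((j+1).factorial : ℤ) * (stirling2 (q+1) (j+1) : ℤ) * Bco (q+1) (j+1) = _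
    rw [Bco]
    push_cast
    ring
  rw [Finset.sum_congr rfl hLt, Finset.sum_congr rfl hRt, Finset.sum_add_distrib]
  set T1 : ℕ → ℤ := fun j => ((j+1).factorial : ℤ) * (j.factorial : ℤ)
      * (stirling2 (q+1) (j+1) : ℤ) * (stirling2 (q+2) (j+1) : ℤ) with hT1
  have ext1 : ∑ j ∈ Finset.range (q+2), T1 j = ∑ j ∈ Finset.range (q+1), T1 j := by
    rw [Finset.sum_range_succ]
    have : T1 (q+1) = 0 := by
      rw [hT1]
      simp only []
      rw [stirling2_eq_zero_of_lt (show q+1 < q+2 by omega)]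
      push_cast
      ring
    rw [this, add_zero]
  have ext2 : ∑ j ∈ Finset.range (q+2),
      ((j+1).factorial : ℤ) * ((j+1).factorial : ℤ) * (stirling2 (q+1) (j+1) : ℤ)
          * (stirling2 (q+1+1) (j+2) : ℤ)
      = ∑ j ∈ Finset.range (q+1),
      ((j+1).factorial : ℤ) * ((j+1).factorial : ℤ) * (stirling2 (q+1) (j+1) : ℤ)
          * (stirling2 (q+1+1) (j+2) : ℤ) := by
    rw [Finset.sum_range_succ, stirling2_eq_zero_of_lt (show q+1 < q+2 by omega)]
    push_cast
    ring
  rw [← ext1, ← ext2, key (q+1) (by omega)]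
  have : ∑ j ∈ Finset.range (q+1+1),
      ((j+1).factorial : ℤ) * (j.factorial : ℤ) * (stirling2 (q+1) (j+1) : ℤ)
        * (stirling2 (q+1+1) (j+1) : ℤ)
      = ∑ j ∈ Finset.range (q+2), T1 j := rfl
  rw [this]
  ring

theorem polyBernoulliB_eq_two_mul_polyBernoulliC (p : ℕ) (hp : p.Prime) (hp7 : 7 ≤ p) :
    polyBernoulliB (p - 3) (p - 3) = 2 * polyBernoulliC (p - 2) (p - 4) := by
  have h1 : p - 3 = (p - 4) + 1 := by omega
  have h2 : p - 2 = (p - 4) + 2 := by omega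
  rw [h1, h2]
  exact main_identity (p - 4) (by omega)
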